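/- Let a, b ∈ ℝ and let K be the Killing tensor with components K^{11} = (y-b)², K^{12} = K^{21} = -(x-a)(y-b), K^{22} = (x-a)². If the Bertrand–Darboux compatibility condition d(K̂ dV) = 0 holds for the Smorodinsky–Winternitz potential V = -ω(x²+y²) + α/x² + β/y² on an open set where x ≠ 0 and y ≠ 0, then ω²(b x - a y) + a(b - y)α/x⁴ + b(x - a)β/y⁴ = 0 holds identically on that set. -/

import Mathlib

open Filter

lemma hdaux (c x : ℝ) (n : ℕ) (hx : x ≠ 0) :
    HasDerivAt (fun t : ℝ => c / t^(n+1)) (-((n+1)*c)/x^(n+2)) x := by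
  have h := (hasDerivAt_const x c).div (hasDerivAt_pow (n+1) x) (pow_ne_zero (n+1) hx)
  refine h.congr_deriv ?_
  simp only [Nat.add_sub_cancel]
  field_simp
  push_cast
  ring

lemma Vx_eq (ω α β x y : ℝ) (hx : x ≠ 0) :
    deriv (fun t => -ω*(t^2 + y^2) + α/t^2 + β/y^2) x = -2*ω*x - 2*α/x^3 := by
  have h1 : HasDerivAt (fun t : ℝ => -ω*(t^2 + y^2)) (-ω*(2*x)) x := by
    simpa using (((hasDerivAt_pow 2 x).add_const (y^2)).const_mul (-ω))
  have h2 := hdaux α x 1 hx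
  have h := (h1.add h2).add_const (β/y^2)
  rw [HasDerivAt.deriv (f := fun t => -ω*(t^2 + y^2) + α/t^2 + β/y^2) h]
  field_simp
  ring

lemma Vy_eq (ω α β x y : ℝ) (hy : y ≠ 0) :
    deriv (fun t => -ω*(x^2 + t^2) + α/x^2 + β/t^2) y = -2*ω*y - 2*β/y^3 := by
  have h1 : HasDerivAt (fun t : ℝ => -ω*(x^2 + t^2)) (-ω*(2*y)) y := by
    simpa using (((hasDerivAt_pow 2 y).const_add (x^2)).const_mul (-ω))
  have h2 := hdaux β y 1 hy
  have h := (h1.add_const (α/x^2)).add h2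
  rw [HasDerivAt.deriv (f := fun t => -ω*(x^2 + t^2) + α/x^2 + β/t^2) h]
  field_simp
  ring

lemma key_step (ω α β a b : ℝ) (X Y : ℝ) (hX : X ≠ 0) (hY : Y ≠ 0)
    (hE : deriv (fun t => (t - b)^2 * deriv (fun s => -ω*(s^2 + t^2) + α/s^2 + β/t^2) X
            - (X - a)*(t - b) * deriv (fun s => -ω*(X^2 + s^2) + α/X^2 + β/s^2) t) Y
        = deriv (fun t => -((t - a)*(Y - b)) * deriv (fun s => -ω*(s^2 + Y^2) + α/s^2 + β/Y^2) t
            + (t - a)^2 * deriv (fun s => -ω*(t^2 + s^2) + α/t^2 + β/s^2) Y) X) :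
    ω*(b*X - a*Y) + a*(b - Y)*α/X^4 + b*(X - a)*β/Y^4 = 0 := by
  set C1 : ℝ := -2*ω*X - 2*α/X^3 with hC1
  set C2 : ℝ := -2*ω*Y - 2*β/Y^3 with hC2
  -- LHS
  have hevL : (fun t => (t - b)^2 * deriv (fun s => -ω*(s^2 + t^2) + α/s^2 + β/t^2) X
            - (X - a)*(t - b) * deriv (fun s => -ω*(X^2 + s^2) + α/X^2 + β/s^2) t)
      =ᶠ[nhds Y] (fun t => (t - b)^2 * C1 - (X - a)*(t - b) * (-2*ω*t - 2*β/t^3)) := by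
    filter_upwards [eventually_ne_nhds hY] with t ht
    rw [Vx_eq ω α β X t hX, Vy_eq ω α β X t ht]
  have hL2 : HasDerivAt (fun t => (t - b)^2 * C1 - (X - a)*(t - b) * (-2*ω*t - 2*β/t^3))
      (2*(Y-b)*C1 - (X-a)*((-2*ω*Y - 2*β/Y^3) + (Y-b)*(-2*ω + 6*β/Y^4))) Y := by
    have hA : HasDerivAt (fun t : ℝ => (t - b)^2) (2*(Y-b)) Y := by
      simpa [Pi.pow_def] using ((hasDerivAt_id Y).sub_const b).pow 2
    have hB : HasDerivAt (fun t : ℝ => (t - b)) 1 Y := (hasDerivAt_id Y).sub_const b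
    have hC : HasDerivAt (fun t : ℝ => -2*ω*t - 2*β/t^3) (-2*ω + 6*β/Y^4) Y := by
      have hfun : (fun t : ℝ => -2*ω*t - 2*β/t^3) = fun t : ℝ => (-(2*ω))*t + (-(2*β))/t^(2+1) := by
        funext t; ring
      rw [hfun]
      have := ((hasDerivAt_id Y).const_mul (-(2*ω))).add (hdaux (-(2*β)) Y 2 hY)
      refine this.congr_deriv ?_
      field_simp
      ring
    have hprod : HasDerivAt (fun t : ℝ => (X - a)*((t - b) * (-2*ω*t - 2*β/t^3)))
        ((X-a)*(1*(-2*ω*Y - 2*β/Y^3) + (Y-b)*(-2*ω + 6*β/Y^4))) Y :=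
      (hB.mul hC).const_mul (X-a)
    have hfun2 : (fun t : ℝ => (t - b)^2 * C1 - (X - a)*(t - b) * (-2*ω*t - 2*β/t^3))
        = fun t : ℝ => (t - b)^2 * C1 - (X - a)*((t - b) * (-2*ω*t - 2*β/t^3)) := by
      funext t; ring
    rw [hfun2]
    refine ((hA.mul_const C1).sub hprod).congr_deriv ?_
    ring
  -- RHS
  have hevR : (fun t => -((t - a)*(Y - b)) * deriv (fun s => -ω*(s^2 + Y^2) + α/s^2 + β/Y^2) t
            + (t - a)^2 * deriv (fun s => -ω*(t^2 + s^2) + α/t^2 + β/s^2) Y)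
      =ᶠ[nhds X] (fun t => -((t - a)*(Y - b)) * (-2*ω*t - 2*α/t^3) + (t - a)^2 * C2) := by
    filter_upwards [eventually_ne_nhds hX] with t ht
    rw [Vx_eq ω α β t Y ht, Vy_eq ω α β t Y hY]
  have hR2 : HasDerivAt (fun t => -((t - a)*(Y - b)) * (-2*ω*t - 2*α/t^3) + (t - a)^2 * C2)
      (-((Y-b)*(-2*ω*X - 2*α/X^3) + (X-a)*(Y-b)*(-2*ω + 6*α/X^4)) + 2*(X-a)*C2) X := by
    have hA : HasDerivAt (fun t : ℝ => (t - a)^2) (2*(X-a)) X := by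
      simpa [Pi.pow_def] using ((hasDerivAt_id X).sub_const a).pow 2
    have hB : HasDerivAt (fun t : ℝ => (t - a)*(Y - b)) (Y - b) X := by
      simpa using ((hasDerivAt_id X).sub_const a).mul_const (Y-b)
    have hC : HasDerivAt (fun t : ℝ => -2*ω*t - 2*α/t^3) (-2*ω + 6*α/X^4) X := by
      have hfun : (fun t : ℝ => -2*ω*t - 2*α/t^3) = fun t : ℝ => (-(2*ω))*t + (-(2*α))/t^(2+1) := by
        funext t; ring
      rw [hfun]
      have := ((hasDerivAt_id X).const_mul (-(2*ω))).add (hdaux (-(2*α)) X 2 hX)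
      refine this.congr_deriv ?_
      field_simp
      ring
    have hfun2 : (fun t : ℝ => -((t - a)*(Y - b)) * (-2*ω*t - 2*α/t^3) + (t - a)^2 * C2)
        = fun t : ℝ => -((t - a)*(Y - b) * (-2*ω*t - 2*α/t^3)) + (t - a)^2 * C2 := by
      funext t; ring
    rw [hfun2]
    exact ((hB.mul hC).neg).add (hA.mul_const C2)
  rw [hevL.deriv_eq, hevR.deriv_eq, hL2.deriv, hR2.deriv] at hE
  rw [hC1, hC2] at hE
  field_simp at hE
  have hQ : X^6*Y^6*(ω*(b*X - a*Y)*(X^4*Y^4) + a*(b - Y)*α*Y^4 + b*(X - a)*β*X^4) = 0 := by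
    linear_combination (X^6*Y^6/6) * hE
  have hP : ω*(b*X - a*Y)*(X^4*Y^4) + a*(b - Y)*α*Y^4 + b*(X - a)*β*X^4 = 0 :=
    (mul_eq_zero.mp hQ).resolve_left (by
      exact mul_ne_zero (pow_ne_zero 6 hX) (pow_ne_zero 6 hY))
  field_simp
  linear_combination hP

theorem sw_bertrand_darboux_shifted_polar (ω α β a b : ℝ)
    (U : Set (ℝ × ℝ)) (hU : IsOpen U)
    (hax : ∀ p ∈ U, p.1 ≠ 0 ∧ p.2 ≠ 0)
    (hBD :
      let V : ℝ → ℝ → ℝ := fun x y => -ω*(x^2 + y^2) + α/x^2 + β/y^2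
      let Vx : ℝ → ℝ → ℝ := fun x y => deriv (fun t => V t y) x
      let Vy : ℝ → ℝ → ℝ := fun x y => deriv (fun t => V x t) y
      ∀ p ∈ U,
        deriv (fun t => (t - b)^2 * Vx p.1 t - (p.1 - a)*(t - b) * Vy p.1 t) p.2
          = deriv (fun t => -((t - a)*(p.2 - b)) * Vx t p.2 + (t - a)^2 * Vy t p.2) p.1) :
    ∀ p ∈ U,
      ω^2*(b*p.1 - a*p.2) + a*(b - p.2)*α/p.1^4 + b*(p.1 - a)*β/p.2^4 = 0 := by
  have key : ∀ q ∈ U, ω*(b*q.1 - a*q.2) + a*(b - q.2)*α/q.1^4 + b*(q.1 - a)*β/q.2^4 = 0 := by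
    intro q hq
    obtain ⟨hX, hY⟩ := hax q hq
    exact key_step ω α β a b q.1 q.2 hX hY (hBD q hq)
  intro p hp
  obtain ⟨hX, hY⟩ := hax p hp
  set X := p.1 with hXdef
  set Y := p.2 with hYdef
  -- horizontal slice
  have hUx : ∀ᶠ t in nhds X, (t, Y) ∈ U := by
    have hc : ContinuousAt (fun t : ℝ => (t, Y)) X :=
      (continuous_id.prodMk continuous_const).continuousAt
    have := hc.preimage_mem_nhds (hU.mem_nhds (by simpa [hXdef, hYdef] using hp))
    exact this
  have hgx : (fun t => ω*(b*t - a*Y) + a*(b - Y)*α/t^4 + b*(t - a)*β/Y^4)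
      =ᶠ[nhds X] (fun _ => (0:ℝ)) := by
    filter_upwards [hUx] with t ht
    simpa using key (t, Y) ht
  have haα : a*(b - Y)*α = 0 := by
    -- first derivative eventually
    have hne : ∀ᶠ t in nhds X, t ≠ (0:ℝ) := eventually_ne_nhds hX
    have hd1 : ∀ᶠ t in nhds X,
        deriv (fun s => ω*(b*s - a*Y) + a*(b - Y)*α/s^4 + b*(s - a)*β/Y^4) t
          = ω*b + (-(4*(a*(b - Y)*α)))/t^5 + b*β/Y^4 := by
      filter_upwards [hne] with t ht
      have h1 : HasDerivAt (fun s : ℝ => ω*(b*s - a*Y)) (ω*b) t := by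
        have : HasDerivAt (fun s : ℝ => b*s - a*Y) b t := by
          simpa using ((hasDerivAt_id t).const_mul b).sub_const (a*Y)
        simpa [mul_comm] using this.const_mul ω
      have h2 : HasDerivAt (fun s : ℝ => a*(b - Y)*α/s^4)
          (-(4*(a*(b - Y)*α))/t^5) t := by
        have := hdaux (a*(b - Y)*α) t 3 ht
        convert this using 2 <;> norm_num
      have h3 : HasDerivAt (fun s : ℝ => b*(s - a)*β/Y^4) (b*β/Y^4) t := by
        have : HasDerivAt (fun s : ℝ => b*(s - a)*β/Y^4) (b*1*β/Y^4) t := by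
          have h0 : (fun s : ℝ => b*(s - a)*β/Y^4)
              = fun s : ℝ => (b*β/Y^4)*s - (b*a*β/Y^4) := by
            funext s; ring
          rw [h0]
          simpa [mul_comm, mul_assoc, mul_left_comm] using
            (((hasDerivAt_id t).const_mul (b*β/Y^4)).sub_const (b*a*β/Y^4))
        simpa using this
      exact ((h1.add h2).add h3).deriv
    have hd0 : ∀ᶠ t in nhds X,
        deriv (fun s => ω*(b*s - a*Y) + a*(b - Y)*α/s^4 + b*(s - a)*β/Y^4) t = 0 := by
      have := hgx.deriv
      filter_upwards [this] with t ht
      rw [ht, deriv_const]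
    have hg2 : (fun t : ℝ => ω*b + (-(4*(a*(b - Y)*α)))/t^5 + b*β/Y^4)
        =ᶠ[nhds X] (fun _ => (0:ℝ)) := by
      filter_upwards [hd1, hd0] with t h1 h0
      rw [← h1, h0]
    -- differentiate once more
    have hD2 : deriv (fun t : ℝ => ω*b + (-(4*(a*(b - Y)*α)))/t^5 + b*β/Y^4) X
        = deriv (fun _ : ℝ => (0:ℝ)) X := hg2.deriv_eq
    have hval : HasDerivAt (fun t : ℝ => ω*b + (-(4*(a*(b - Y)*α)))/t^5 + b*β/Y^4)
        (20*(a*(b - Y)*α)/X^6) X := by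
      have hfun : (fun t : ℝ => ω*b + (-(4*(a*(b - Y)*α)))/t^5 + b*β/Y^4)
          = fun t : ℝ => ((-(4*(a*(b - Y)*α)))/t^(4+1) + (ω*b + b*β/Y^4)) := by
        funext t; ring
      rw [hfun]
      have := (hdaux (-(4*(a*(b - Y)*α))) X 4 hX).add_const (ω*b + b*β/Y^4)
      refine this.congr_deriv ?_
      norm_num
      ring
    rw [hval.deriv, deriv_const] at hD2
    have h6 : X^6 ≠ 0 := pow_ne_zero 6 hX
    field_simp at hD2
    linarith [hD2]
  -- vertical slice
  have hUy : ∀ᶠ t in nhds Y, (X, t) ∈ U := by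
    have hc : ContinuousAt (fun t : ℝ => (X, t)) Y :=
      (continuous_const.prodMk continuous_id).continuousAt
    have := hc.preimage_mem_nhds (hU.mem_nhds (by simpa [hXdef, hYdef] using hp))
    exact this
  have hgy : (fun t => ω*(b*X - a*t) + a*(b - t)*α/X^4 + b*(X - a)*β/t^4)
      =ᶠ[nhds Y] (fun _ => (0:ℝ)) := by
    filter_upwards [hUy] with t ht
    simpa using key (X, t) ht
  have hbβ : b*(X - a)*β = 0 := by
    have hne : ∀ᶠ t in nhds Y, t ≠ (0:ℝ) := eventually_ne_nhds hY
    have hd1 : ∀ᶠ t in nhds Y,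
        deriv (fun s => ω*(b*X - a*s) + a*(b - s)*α/X^4 + b*(X - a)*β/s^4) t
          = -(ω*a) + (-(a*α/X^4)) + (-(4*(b*(X - a)*β)))/t^5 := by
      filter_upwards [hne] with t ht
      have h1 : HasDerivAt (fun s : ℝ => ω*(b*X - a*s) + a*(b - s)*α/X^4)
          (-(ω*a) + (-(a*α/X^4))) t := by
        have h0 : (fun s : ℝ => ω*(b*X - a*s) + a*(b - s)*α/X^4)
            = fun s : ℝ => (-(ω*a) + (-(a*α/X^4)))*s + (ω*b*X + a*b*α/X^4) := by
          funext s; ring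
        rw [h0]
        simpa using ((hasDerivAt_id t).const_mul (-(ω*a) + (-(a*α/X^4)))).add_const
          (ω*b*X + a*b*α/X^4)
      have h2 : HasDerivAt (fun s : ℝ => b*(X - a)*β/s^4)
          (-(4*(b*(X - a)*β))/t^5) t := by
        have := hdaux (b*(X - a)*β) t 3 ht
        convert this using 2 <;> norm_num
      exact (h1.add h2).deriv
    have hd0 : ∀ᶠ t in nhds Y,
        deriv (fun s => ω*(b*X - a*s) + a*(b - s)*α/X^4 + b*(X - a)*β/s^4) t = 0 := by
      have := hgy.deriv
      filter_upwards [this] with t ht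
      rw [ht, deriv_const]
    have hg2 : (fun t : ℝ => -(ω*a) + (-(a*α/X^4)) + (-(4*(b*(X - a)*β)))/t^5)
        =ᶠ[nhds Y] (fun _ => (0:ℝ)) := by
      filter_upwards [hd1, hd0] with t h1 h0
      rw [← h1, h0]
    have hD2 : deriv (fun t : ℝ => -(ω*a) + (-(a*α/X^4)) + (-(4*(b*(X - a)*β)))/t^5) Y
        = deriv (fun _ : ℝ => (0:ℝ)) Y := hg2.deriv_eq
    have hval : HasDerivAt (fun t : ℝ => -(ω*a) + (-(a*α/X^4)) + (-(4*(b*(X - a)*β)))/t^5)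
        (20*(b*(X - a)*β)/Y^6) Y := by
      have hfun : (fun t : ℝ => -(ω*a) + (-(a*α/X^4)) + (-(4*(b*(X - a)*β)))/t^5)
          = fun t : ℝ => ((-(4*(b*(X - a)*β)))/t^(4+1) + (-(ω*a) + (-(a*α/X^4)))) := by
        funext t; ring
      rw [hfun]
      have := (hdaux (-(4*(b*(X - a)*β))) Y 4 hY).add_const (-(ω*a) + (-(a*α/X^4)))
      refine this.congr_deriv ?_
      norm_num
      ring
    rw [hval.deriv, deriv_const] at hD2
    field_simp at hD2
    linarith [hD2]
  -- conclude
  have hF := key p hp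
  have hω : ω*(b*X - a*Y) = 0 := by
    have : a*(b - Y)*α/X^4 = 0 := by rw [haα]; simp
    have h2 : b*(X - a)*β/Y^4 = 0 := by rw [hbβ]; simp
    rw [hXdef, hYdef] at *
    linarith [hF, this, h2]
  calc ω^2*(b*X - a*Y) + a*(b - Y)*α/X^4 + b*(X - a)*β/Y^4
      = ω*(ω*(b*X - a*Y)) + (a*(b - Y)*α)/X^4 + (b*(X - a)*β)/Y^4 := by ring
    _ = 0 := by rw [hω, haα, hbβ]; simp
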